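/- arXiv:2402.10089 — 4 statements merged into one kernel-verified Lean document; each statement's English description precedes it below -/
import Mathlib

section
/- Let x be a real random variable with finite exponential moment E[e^{a|x|}] < ∞ for some a > 0. Then the function φ(z) = E[e^{i z x}] is well-defined (the integrand is integrable) and complex-differentiable (analytic) at every point z ∈ ℂ of the horizontal strip −a < Im(z) < a. -/
open MeasureTheory ProbabilityTheory Complex

/-- If a real random variable `x` has a finite exponential moment
`E[exp (a |x|)] < ∞` for some `a > 0`, then `φ(z) = E[exp (i z x)]` is well defined
(the integrand is integrable) and complex differentiable at every point `z` of the
horizontal strip `-a < Im z < a`. -/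
theorem charFun_analytic_on_strip
    {Ω : Type*} [MeasurableSpace Ω] (μ : Measure Ω) [IsProbabilityMeasure μ]
    (x : Ω → ℝ) (hx : Measurable x)
    {a : ℝ} (ha : 0 < a)
    (hexp : Integrable (fun ω => Real.exp (a * |x ω|)) μ) :
    ∀ z : ℂ, -a < z.im → z.im < a →
      Integrable (fun ω => Complex.exp (Complex.I * z * (x ω : ℂ))) μ ∧
      DifferentiableAt ℂ
        (fun w : ℂ => ∫ ω, Complex.exp (Complex.I * w * (x ω : ℂ)) ∂μ) z := by
  intro z hz1 hz2
  have hxC : Measurable (fun ω => (x ω : ℂ)) := Complex.measurable_ofReal.comp hx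
  have habs : |z.im| < a := abs_lt.2 ⟨hz1, hz2⟩
  have hre : ∀ (w : ℂ) ω, (Complex.I * w * (x ω : ℂ)).re = -w.im * x ω := by
    intro w ω
    simp [Complex.mul_re, Complex.mul_im]
  have hmeas : ∀ w : ℂ, AEStronglyMeasurable (fun ω => Complex.exp (Complex.I * w * (x ω : ℂ))) μ := by
    intro w
    exact (Complex.measurable_exp.comp (measurable_const.mul hxC)).aestronglyMeasurable
  have hnorm : ∀ (w : ℂ) ω, ‖Complex.exp (Complex.I * w * (x ω : ℂ))‖ = Real.exp (-w.im * x ω) := by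
    intro w ω
    rw [Complex.norm_exp, hre]
  -- integrability for any w with |w.im| ≤ a
  have hint : ∀ w : ℂ, |w.im| ≤ a →
      Integrable (fun ω => Complex.exp (Complex.I * w * (x ω : ℂ))) μ := by
    intro w hw
    refine hexp.mono (hmeas w) (Filter.Eventually.of_forall fun ω => ?_)
    rw [hnorm, Real.norm_eq_abs, Real.abs_exp]
    apply Real.exp_le_exp.2
    calc -w.im * x ω ≤ |(-w.im) * x ω| := le_abs_self _
      _ = |w.im| * |x ω| := by rw [abs_mul, abs_neg]
      _ ≤ a * |x ω| := mul_le_mul_of_nonneg_right hw (abs_nonneg _)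
  refine ⟨hint z habs.le, ?_⟩
  set ε := (a - |z.im|) / 2 with hε
  have hεpos : 0 < ε := by rw [hε]; linarith
  have himball : ∀ w ∈ Metric.ball z ε, |w.im| ≤ |z.im| + ε := by
    intro w hw
    have h1 : |w.im - z.im| ≤ ‖w - z‖ := by
      simpa using Complex.abs_im_le_norm (w - z)
    have h2 : ‖w - z‖ < ε := by simpa [Complex.dist_eq] using hw
    have := abs_sub_abs_le_abs_sub w.im z.im
    linarith [abs_sub_abs_le_abs_sub w.im z.im]
  have key := hasDerivAt_integral_of_dominated_loc_of_deriv_le (μ := μ)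
    (F := fun w ω => Complex.exp (Complex.I * w * (x ω : ℂ)))
    (F' := fun w ω => Complex.exp (Complex.I * w * (x ω : ℂ)) * (Complex.I * (x ω : ℂ)))
    (x₀ := z) (bound := fun ω => ε⁻¹ * Real.exp (a * |x ω|)) (Metric.ball_mem_nhds z hεpos)
    (Filter.Eventually.of_forall fun w => hmeas w)
    (hint z habs.le)
    ((((Complex.measurable_exp.comp (measurable_const.mul hxC)).mul
      (measurable_const.mul hxC))).aestronglyMeasurable)
    ?_ (hexp.const_mul _) ?_
  · exact key.2.differentiableAt
  · -- bound
    refine Filter.Eventually.of_forall fun ω => fun w hw => ?_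
    rw [norm_mul, hnorm]
    have h01 : ‖Complex.I * (x ω : ℂ)‖ = |x ω| := by
      simp [norm_mul]
    rw [h01]
    have hb : |w.im| ≤ |z.im| + ε := himball w hw
    have h1 : -w.im * x ω ≤ (|z.im| + ε) * |x ω| := by
      calc -w.im * x ω ≤ |(-w.im) * x ω| := le_abs_self _
        _ = |w.im| * |x ω| := by rw [abs_mul, abs_neg]
        _ ≤ (|z.im| + ε) * |x ω| := mul_le_mul_of_nonneg_right hb (abs_nonneg _)
    have h2 : |x ω| ≤ ε⁻¹ * Real.exp (ε * |x ω|) := by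
      have h3 : ε * |x ω| ≤ Real.exp (ε * |x ω|) := by
        have := Real.add_one_le_exp (ε * |x ω|); linarith
      rw [inv_mul_eq_div, le_div_iff₀ hεpos]
      nlinarith
    calc Real.exp (-w.im * x ω) * |x ω|
        ≤ Real.exp ((|z.im| + ε) * |x ω|) * (ε⁻¹ * Real.exp (ε * |x ω|)) := by
          apply mul_le_mul (Real.exp_le_exp.2 h1) h2 (abs_nonneg _) (Real.exp_pos _).le
      _ = ε⁻¹ * Real.exp ((|z.im| + ε + ε) * |x ω|) := by
          rw [show (|z.im| + ε + ε) * |x ω| = (|z.im| + ε) * |x ω| + ε * |x ω| by ring,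
            Real.exp_add]; ring
      _ = ε⁻¹ * Real.exp (a * |x ω|) := by
          congr 2
          rw [hε]; ring
  · -- derivative
    refine Filter.Eventually.of_forall fun ω => fun w _ => ?_
    have h : ∀ w : ℂ, Complex.I * w * (x ω : ℂ) = (Complex.I * (x ω : ℂ)) * w := by
      intro w; ring
    simp only [h]
    simpa using ((hasDerivAt_id w).const_mul (Complex.I * (x ω : ℂ))).cexp
end

section
/- Let x_i and x_j be real random variables on a common probability space with E[|x_i| · |x_j|^ℓ] < ∞ and E[|x_j|^ℓ] < ∞ for all ℓ ≤ r. Suppose x_i is mean independent of x_j, i.e., the conditional expectation of x_i given the σ-algebra generated by x_j equals E[x_i] almost surely. Then for every r ≥ 2, the joint cumulant whose index tuple consists of i once and j repeated r − 1 times vanishes: κ(x)_{i j ⋯ j} = 0. -/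
open MeasureTheory ProbabilityTheory Finset

/-- The set partitions of a finset `s`: finsets `P` of nonempty, pairwise disjoint
blocks whose union is `s`. -/
def setPartitionsOf {ι : Type*} [DecidableEq ι] [Fintype ι] (s : Finset ι) :
    Finset (Finset (Finset ι)) :=
  (Finset.univ : Finset (Finset (Finset ι))).filter
    (fun P => (∀ B ∈ P, B.Nonempty) ∧
      (∀ B ∈ P, ∀ C ∈ P, B ≠ C → Disjoint B C) ∧ P.sup id = s)

/-- The joint cumulant of the subfamily `(x_k)_{k ∈ s}` of a family of real random
variables, defined by the combinatorial moment–cumulant formula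
`κ = Σ_{π} (-1)^{|π|-1} (|π|-1)! Π_{B ∈ π} E[Π_{k ∈ B} x_k]`,
the sum running over all set partitions `π` of `s`. -/
noncomputable def jointCumulant {Ω : Type*} [MeasurableSpace Ω] (μ : Measure Ω)
    {ι : Type*} [DecidableEq ι] [Fintype ι] (x : ι → Ω → ℝ) (s : Finset ι) : ℝ :=
  ∑ P ∈ setPartitionsOf s,
    (-1 : ℝ) ^ (P.card - 1) * (Nat.factorial (P.card - 1)) *
      ∏ B ∈ P, ∫ ω, (∏ k ∈ B, x k ω) ∂μ

namespace CumulantAux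

variable {ι : Type*} [DecidableEq ι] [Fintype ι]

lemma mem_setPartitionsOf {s : Finset ι} {P : Finset (Finset ι)} :
    P ∈ setPartitionsOf s ↔ (∀ B ∈ P, B.Nonempty) ∧
      (∀ B ∈ P, ∀ C ∈ P, B ≠ C → Disjoint B C) ∧ P.sup id = s := by
  simp [setPartitionsOf]

lemma subset_of_mem {s : Finset ι} {P : Finset (Finset ι)} (hP : P ∈ setPartitionsOf s)
    {B : Finset ι} (hB : B ∈ P) : B ⊆ s := by
  rw [mem_setPartitionsOf] at hP
  have h := Finset.le_sup (f := id) hB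
  rw [hP.2.2] at h
  exact h

variable (i : ι)

/-- Glue the index `i` onto a partition of `univ.erase i`: either as a new singleton
block (`none`) or into an existing block `B` (`some B`). -/
def glue (σ : Finset (Finset ι)) : Option (Finset ι) → Finset (Finset ι)
  | none => insert {i} σ
  | some B => insert (insert i B) (σ.erase B)

/-- The block of `P` containing `i` (when it is unique). -/
def blkOf (P : Finset (Finset ι)) : Finset ι :=
  P.sup (fun B => if i ∈ B then B else ∅)

/-- Restrict a partition of `univ` to `univ.erase i`. -/
def partOf (P : Finset (Finset ι)) : Finset (Finset ι) :=
  (P.image (fun B => B.erase i)).erase ∅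

def optOf (P : Finset (Finset ι)) : Option (Finset ι) :=
  if {i} ∈ P then none else some ((blkOf i P).erase i)

lemma not_mem_of_block {σ : Finset (Finset ι)} (hσ : σ ∈ setPartitionsOf (univ.erase i))
    {B : Finset ι} (hB : B ∈ σ) : i ∉ B := by
  intro hi
  exact (Finset.mem_erase.mp (subset_of_mem hσ hB hi)).1 rfl

lemma singleton_not_mem {σ : Finset (Finset ι)} (hσ : σ ∈ setPartitionsOf (univ.erase i)) :
    ({i} : Finset ι) ∉ σ := fun h => not_mem_of_block i hσ h (Finset.mem_singleton_self i)

lemma glue_none_mem {σ : Finset (Finset ι)} (hσ : σ ∈ setPartitionsOf (univ.erase i)) :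
    glue i σ none ∈ setPartitionsOf (univ : Finset ι) := by
  have hσ' := mem_setPartitionsOf.mp hσ
  rw [mem_setPartitionsOf]
  refine ⟨?_, ?_, ?_⟩
  · intro B hB
    rcases Finset.mem_insert.mp hB with h | h
    · exact h ▸ Finset.singleton_nonempty i
    · exact hσ'.1 B h
  · intro B hB C hC hne
    rcases Finset.mem_insert.mp hB with h | h <;> rcases Finset.mem_insert.mp hC with h' | h'
    · exact absurd (h.trans h'.symm) hne
    · subst h
      exact Finset.disjoint_singleton_left.mpr (not_mem_of_block i hσ h')
    · subst h'
      exact (Finset.disjoint_singleton_left.mpr (not_mem_of_block i hσ h)).symm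
    · exact hσ'.2.1 B h C h' hne
  · rw [glue, Finset.sup_insert, hσ'.2.2]
    simp only [id]
    rw [Finset.sup_eq_union, ← Finset.insert_eq, Finset.insert_erase (Finset.mem_univ i)]

lemma glue_some_mem {σ : Finset (Finset ι)} (hσ : σ ∈ setPartitionsOf (univ.erase i))
    {B : Finset ι} (hB : B ∈ σ) :
    glue i σ (some B) ∈ setPartitionsOf (univ : Finset ι) := by
  have hσ' := mem_setPartitionsOf.mp hσ
  rw [mem_setPartitionsOf]
  refine ⟨?_, ?_, ?_⟩
  · intro C hC
    rcases Finset.mem_insert.mp hC with h | h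
    · exact h ▸ Finset.insert_nonempty i B
    · exact hσ'.1 C (Finset.mem_of_mem_erase h)
  · intro C hC D hD hne
    rcases Finset.mem_insert.mp hC with h | h <;> rcases Finset.mem_insert.mp hD with h' | h'
    · exact absurd (h.trans h'.symm) hne
    · subst h
      have hD' := Finset.mem_of_mem_erase h'
      have hDB : D ≠ B := (Finset.mem_erase.mp h').1
      rw [Finset.disjoint_insert_left]
      exact ⟨not_mem_of_block i hσ hD', hσ'.2.1 B hB D hD' (Ne.symm hDB)⟩
    · subst h'
      have hC' := Finset.mem_of_mem_erase h
      have hCB : C ≠ B := (Finset.mem_erase.mp h).1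
      rw [Finset.disjoint_insert_right]
      exact ⟨not_mem_of_block i hσ hC', hσ'.2.1 C hC' B hB hCB⟩
    · exact hσ'.2.1 C (Finset.mem_of_mem_erase h) D (Finset.mem_of_mem_erase h') hne
  · rw [glue, Finset.sup_insert]
    have h1 : σ.sup id = B ⊔ (σ.erase B).sup id := by
      conv_lhs => rw [← Finset.insert_erase hB]
      rw [Finset.sup_insert]
      rfl
    have h2 : id (insert i B) ⊔ (σ.erase B).sup id = insert i (B ⊔ (σ.erase B).sup id) := by
      simp only [id, Finset.sup_eq_union, Finset.insert_union]
    rw [h2, ← h1, hσ'.2.2, Finset.insert_erase (Finset.mem_univ i)]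

lemma insert_not_mem_erase {σ : Finset (Finset ι)} (hσ : σ ∈ setPartitionsOf (univ.erase i))
    {B : Finset ι} : insert i B ∉ σ.erase B := by
  intro h
  exact not_mem_of_block i hσ (Finset.mem_of_mem_erase h) (Finset.mem_insert_self i B)

lemma glue_none_card {σ : Finset (Finset ι)} (hσ : σ ∈ setPartitionsOf (univ.erase i)) :
    (glue i σ none).card = σ.card + 1 :=
  Finset.card_insert_of_notMem (singleton_not_mem i hσ)

lemma glue_some_card {σ : Finset (Finset ι)} (hσ : σ ∈ setPartitionsOf (univ.erase i))
    {B : Finset ι} (hB : B ∈ σ) : (glue i σ (some B)).card = σ.card := by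
  rw [glue, Finset.card_insert_of_notMem (insert_not_mem_erase i hσ),
    Finset.card_erase_of_mem hB]
  exact Nat.succ_pred_eq_of_pos (Finset.card_pos.mpr ⟨B, hB⟩)

lemma partOf_glue_none {σ : Finset (Finset ι)} (hσ : σ ∈ setPartitionsOf (univ.erase i)) :
    partOf i (glue i σ none) = σ := by
  have hσ' := mem_setPartitionsOf.mp hσ
  rw [glue, partOf, Finset.image_insert]
  have h1 : ({i} : Finset ι).erase i = ∅ := by simp
  have h2 : σ.image (fun B => B.erase i) = σ := by
    refine (Finset.image_congr ?_).trans Finset.image_id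
    intro B hB
    exact Finset.erase_eq_of_notMem (not_mem_of_block i hσ hB)
  have hne : (∅ : Finset ι) ∉ σ := fun h => (hσ'.1 ∅ h).ne_empty rfl
  rw [h1, h2, Finset.erase_insert hne]

lemma optOf_glue_none {σ : Finset (Finset ι)} (hσ : σ ∈ setPartitionsOf (univ.erase i)) :
    optOf i (glue i σ none) = none := by
  simp only [optOf, glue]
  exact if_pos (Finset.mem_insert_self _ _)

lemma singleton_ne_insert {σ : Finset (Finset ι)} (hσ : σ ∈ setPartitionsOf (univ.erase i))
    {B : Finset ι} (hB : B ∈ σ) : ({i} : Finset ι) ≠ insert i B := by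
  obtain ⟨b, hb⟩ := (mem_setPartitionsOf.mp hσ).1 B hB
  intro h
  have : b ∈ ({i} : Finset ι) := h ▸ Finset.mem_insert_of_mem hb
  rw [Finset.mem_singleton] at this
  exact not_mem_of_block i hσ hB (this ▸ hb)

lemma blkOf_eq {P : Finset (Finset ι)} {B₀ : Finset ι} (hB₀ : B₀ ∈ P) (hi : i ∈ B₀)
    (huniq : ∀ C ∈ P, C ≠ B₀ → i ∉ C) : blkOf i P = B₀ := by
  apply le_antisymm
  · apply Finset.sup_le
    intro C hC
    by_cases h : i ∈ C
    · have : C = B₀ := by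
        by_contra hne
        exact huniq C hC hne h
      simp [h, this, hi]
    · simp [h]
  · have := Finset.le_sup (f := fun B => if i ∈ B then B else ∅) hB₀
    simpa [hi, blkOf] using this

lemma optOf_glue_some {σ : Finset (Finset ι)} (hσ : σ ∈ setPartitionsOf (univ.erase i))
    {B : Finset ι} (hB : B ∈ σ) : optOf i (glue i σ (some B)) = some B := by
  have hiB : i ∉ B := not_mem_of_block i hσ hB
  have hsing : ({i} : Finset ι) ∉ glue i σ (some B) := by
    rw [glue, Finset.mem_insert]
    rintro (h | h)
    · exact singleton_ne_insert i hσ hB h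
    · exact singleton_not_mem i hσ (Finset.mem_of_mem_erase h)
  rw [optOf, if_neg hsing]
  have hblk : blkOf i (glue i σ (some B)) = insert i B := by
    apply blkOf_eq i (Finset.mem_insert_self _ _) (Finset.mem_insert_self i B)
    intro C hC _hne
    rcases Finset.mem_insert.mp hC with h | h
    · exact absurd h _hne
    · exact not_mem_of_block i hσ (Finset.mem_of_mem_erase h)
  rw [hblk, Finset.erase_insert hiB]

lemma partOf_glue_some {σ : Finset (Finset ι)} (hσ : σ ∈ setPartitionsOf (univ.erase i))
    {B : Finset ι} (hB : B ∈ σ) : partOf i (glue i σ (some B)) = σ := by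
  have hσ' := mem_setPartitionsOf.mp hσ
  have hiB : i ∉ B := not_mem_of_block i hσ hB
  rw [glue, partOf, Finset.image_insert]
  have h2 : (σ.erase B).image (fun C => C.erase i) = σ.erase B := by
    refine (Finset.image_congr ?_).trans Finset.image_id
    intro C hC
    exact Finset.erase_eq_of_notMem (not_mem_of_block i hσ (Finset.mem_of_mem_erase hC))
  rw [Finset.erase_insert hiB, h2]
  have h3 : insert B (σ.erase B) = σ := Finset.insert_erase hB
  rw [h3, Finset.erase_eq_of_notMem]
  intro h
  exact (hσ'.1 ∅ h).ne_empty rfl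


lemma uniq_block {P : Finset (Finset ι)} (hP : P ∈ setPartitionsOf (univ : Finset ι))
    {B C : Finset ι} (hB : B ∈ P) (hC : C ∈ P) (hiB : i ∈ B) (hiC : i ∈ C) : B = C := by
  by_contra hne
  exact Finset.disjoint_left.mp ((mem_setPartitionsOf.mp hP).2.1 B hB C hC hne) hiB hiC

lemma exists_block {P : Finset (Finset ι)} (hP : P ∈ setPartitionsOf (univ : Finset ι)) :
    ∃ B₀ ∈ P, i ∈ B₀ := by
  have h := (mem_setPartitionsOf.mp hP).2.2
  have : i ∈ P.sup id := h ▸ Finset.mem_univ i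
  simpa using Finset.mem_sup.mp this

section Reverse

variable {P : Finset (Finset ι)} (hP : P ∈ setPartitionsOf (univ : Finset ι))

include hP

lemma partOf_mem : partOf i P ∈ setPartitionsOf ((univ : Finset ι).erase i) := by
  have hP' := mem_setPartitionsOf.mp hP
  rw [mem_setPartitionsOf]
  refine ⟨?_, ?_, ?_⟩
  · intro B hB
    rw [partOf, Finset.mem_erase] at hB
    exact Finset.nonempty_iff_ne_empty.mpr hB.1
  · intro B hB C hC hne
    rw [partOf, Finset.mem_erase, Finset.mem_image] at hB hC
    obtain ⟨B', hB', rfl⟩ := hB.2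
    obtain ⟨C', hC', rfl⟩ := hC.2
    have hBC' : B' ≠ C' := fun h => hne (h ▸ rfl)
    exact Finset.disjoint_of_subset_left (Finset.erase_subset _ _)
      (Finset.disjoint_of_subset_right (Finset.erase_subset _ _) (hP'.2.1 B' hB' C' hC' hBC'))
  · apply Finset.ext
    intro a
    rw [Finset.mem_sup, Finset.mem_erase]
    constructor
    · rintro ⟨B, hB, haB⟩
      rw [partOf, Finset.mem_erase, Finset.mem_image] at hB
      obtain ⟨hBne, B', hB', rfl⟩ := hB
      exact ⟨(Finset.mem_erase.mp haB).1, Finset.mem_univ a⟩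
    · rintro ⟨hai, -⟩
      have : a ∈ P.sup id := hP'.2.2 ▸ Finset.mem_univ a
      obtain ⟨B, hB, haB⟩ := Finset.mem_sup.mp this
      refine ⟨B.erase i, ?_, Finset.mem_erase.mpr ⟨hai, haB⟩⟩
      rw [partOf, Finset.mem_erase, Finset.mem_image]
      refine ⟨?_, B, hB, rfl⟩
      rw [← Finset.nonempty_iff_ne_empty]
      exact ⟨a, Finset.mem_erase.mpr ⟨hai, haB⟩⟩

lemma glue_partOf_none (hi : ({i} : Finset ι) ∈ P) :
    glue i (partOf i P) (optOf i P) = P := by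
  have hP' := mem_setPartitionsOf.mp hP
  rw [optOf, if_pos hi, glue]
  have himg : P.image (fun B => B.erase i) = insert ∅ (P.erase {i}) := by
    conv_lhs => rw [← Finset.insert_erase hi]
    rw [Finset.image_insert]
    have h0 : ({i} : Finset ι).erase i = ∅ := by simp
    rw [h0]
    congr 1
    refine (Finset.image_congr ?_).trans Finset.image_id
    intro B hB
    rw [Finset.mem_coe, Finset.mem_erase] at hB
    refine Finset.erase_eq_of_notMem fun hiB => ?_
    exact hB.1 (uniq_block i hP hB.2 hi hiB (Finset.mem_singleton_self i))
  have hne : (∅ : Finset ι) ∉ P.erase {i} :=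
    fun h => (hP'.1 ∅ (Finset.mem_of_mem_erase h)).ne_empty rfl
  rw [partOf, himg, Finset.erase_insert hne, Finset.insert_erase hi]

section Some

variable (hi : ({i} : Finset ι) ∉ P)
include hi

lemma blkOf_spec : blkOf i P ∈ P ∧ i ∈ blkOf i P := by
  obtain ⟨B₀, hB₀, hiB₀⟩ := exists_block i hP
  have : blkOf i P = B₀ := by
    apply blkOf_eq i hB₀ hiB₀
    intro C hC hne hiC
    exact hne (uniq_block i hP hC hB₀ hiC hiB₀)
  rw [this]
  exact ⟨hB₀, hiB₀⟩

lemma blkOf_erase_nonempty : ((blkOf i P).erase i).Nonempty := by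
  obtain ⟨hB₀, hiB₀⟩ := blkOf_spec i hP hi
  rw [Finset.nonempty_iff_ne_empty]
  intro h
  apply hi
  have : blkOf i P = {i} := by
    apply Finset.eq_singleton_iff_unique_mem.mpr
    refine ⟨hiB₀, fun a ha => ?_⟩
    by_contra hne
    have : a ∈ (blkOf i P).erase i := Finset.mem_erase.mpr ⟨hne, ha⟩
    rw [h] at this
    exact absurd this (Finset.notMem_empty a)
  exact this ▸ hB₀

lemma partOf_eq_some : partOf i P = insert ((blkOf i P).erase i) (P.erase (blkOf i P)) := by
  have hP' := mem_setPartitionsOf.mp hP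
  obtain ⟨hB₀, hiB₀⟩ := blkOf_spec i hP hi
  have himg : P.image (fun B => B.erase i) =
      insert ((blkOf i P).erase i) (P.erase (blkOf i P)) := by
    conv_lhs => rw [← Finset.insert_erase hB₀]
    rw [Finset.image_insert]
    congr 1
    refine (Finset.image_congr ?_).trans Finset.image_id
    intro B hB
    rw [Finset.mem_coe, Finset.mem_erase] at hB
    refine Finset.erase_eq_of_notMem fun hiB => ?_
    exact hB.1 (uniq_block i hP hB.2 hB₀ hiB hiB₀)
  rw [partOf, himg, Finset.erase_eq_of_notMem]
  rw [Finset.mem_insert]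
  push_neg
  constructor
  · exact fun h => (blkOf_erase_nonempty i hP hi).ne_empty h.symm
  · intro h
    exact (hP'.1 ∅ (Finset.mem_of_mem_erase h)).ne_empty rfl

lemma blkOf_erase_not_mem_erase : (blkOf i P).erase i ∉ P.erase (blkOf i P) := by
  intro h
  obtain ⟨hB₀, hiB₀⟩ := blkOf_spec i hP hi
  have hne := (Finset.mem_erase.mp h).1
  have hmem := Finset.mem_of_mem_erase h
  have hdisj := (mem_setPartitionsOf.mp hP).2.1 _ hmem _ hB₀ hne
  obtain ⟨a, ha⟩ := blkOf_erase_nonempty i hP hi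
  exact Finset.disjoint_left.mp hdisj ha (Finset.mem_of_mem_erase ha)

lemma glue_partOf_some : glue i (partOf i P) (optOf i P) = P := by
  obtain ⟨hB₀, hiB₀⟩ := blkOf_spec i hP hi
  rw [optOf, if_neg hi, glue, partOf_eq_some i hP hi,
    Finset.erase_insert (blkOf_erase_not_mem_erase i hP hi),
    Finset.insert_erase hiB₀, Finset.insert_erase hB₀]

lemma optOf_mem_some : (blkOf i P).erase i ∈ partOf i P := by
  rw [partOf_eq_some i hP hi]
  exact Finset.mem_insert_self _ _

end Some

end Reverse

/-- The key combinatorial identity. -/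
lemma key_sum (m : Finset ι → ℝ) (c : ℝ) (hm0 : m ∅ = 1)
    (hm : ∀ B : Finset ι, i ∉ B → m (insert i B) = c * m B)
    (hne : ((univ : Finset ι).erase i).Nonempty) :
    ∑ P ∈ setPartitionsOf (univ : Finset ι),
      (-1 : ℝ) ^ (P.card - 1) * (Nat.factorial (P.card - 1)) * ∏ B ∈ P, m B = 0 := by
  classical
  have main : ∑ P ∈ setPartitionsOf (univ : Finset ι),
      (-1 : ℝ) ^ (P.card - 1) * (Nat.factorial (P.card - 1)) * ∏ B ∈ P, m B
      = ∑ x ∈ (setPartitionsOf ((univ : Finset ι).erase i)).sigma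
          (fun σ => insert none (σ.image some)),
        (-1 : ℝ) ^ ((glue i x.1 x.2).card - 1) *
          (Nat.factorial ((glue i x.1 x.2).card - 1)) * ∏ B ∈ glue i x.1 x.2, m B := by
    refine Finset.sum_nbij' (i := fun P => ⟨partOf i P, optOf i P⟩)
      (j := fun x => glue i x.1 x.2) ?_ ?_ ?_ ?_ ?_
    · intro P hP
      rw [Finset.mem_sigma]
      refine ⟨partOf_mem i hP, ?_⟩
      by_cases h : ({i} : Finset ι) ∈ P
      · simp only [optOf, if_pos h]
        exact Finset.mem_insert_self _ _
      · simp only [optOf, if_neg h]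
        exact Finset.mem_insert_of_mem (Finset.mem_image_of_mem some (optOf_mem_some i hP h))
    · rintro ⟨σ, o⟩ hx
      rw [Finset.mem_sigma] at hx
      rcases hx with ⟨hσ, ho⟩
      rcases Finset.mem_insert.mp ho with h | h
      · subst h
        exact glue_none_mem i hσ
      · obtain ⟨B, hB, rfl⟩ := Finset.mem_image.mp h
        exact glue_some_mem i hσ hB
    · intro P hP
      by_cases h : ({i} : Finset ι) ∈ P
      · exact glue_partOf_none i hP h
      · exact glue_partOf_some i hP h
    · rintro ⟨σ, o⟩ hx
      rw [Finset.mem_sigma] at hx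
      rcases hx with ⟨hσ, ho⟩
      rcases Finset.mem_insert.mp ho with h | h
      · subst h
        simp [partOf_glue_none i hσ, optOf_glue_none i hσ]
      · obtain ⟨B, hB, rfl⟩ := Finset.mem_image.mp h
        simp [partOf_glue_some i hσ hB, optOf_glue_some i hσ hB]
    · intro P hP
      by_cases h : ({i} : Finset ι) ∈ P
      · rw [glue_partOf_none i hP h]
      · rw [glue_partOf_some i hP h]
  rw [main, Finset.sum_sigma]
  apply Finset.sum_eq_zero
  intro σ hσ
  have hσne : σ.Nonempty := by
    rw [Finset.nonempty_iff_ne_empty]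
    rintro rfl
    rw [mem_setPartitionsOf] at hσ
    rw [Finset.sup_empty] at hσ
    exact hne.ne_empty hσ.2.2.symm
  obtain ⟨n, hn⟩ : ∃ n, σ.card = n + 1 :=
    ⟨σ.card - 1, (Nat.succ_pred_eq_of_pos (Finset.card_pos.mpr hσne)).symm⟩
  have hnone : (none : Option (Finset ι)) ∉ σ.image some := by simp
  rw [Finset.sum_insert hnone, Finset.sum_image (fun _ _ _ _ h => Option.some_injective _ h)]
  have hterm_none : (-1 : ℝ) ^ ((glue i σ none).card - 1) *
      (Nat.factorial ((glue i σ none).card - 1)) * ∏ B ∈ glue i σ none, m B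
      = (-1 : ℝ) ^ (n + 1) * (Nat.factorial (n + 1)) * (c * ∏ B ∈ σ, m B) := by
    rw [glue_none_card i hσ, hn]
    simp only [Nat.add_sub_cancel]
    congr 1
    rw [glue, Finset.prod_insert (singleton_not_mem i hσ)]
    have : m {i} = c := by
      have := hm ∅ (Finset.notMem_empty i)
      simpa [hm0] using this
    rw [this]
  have hterm_some : ∀ B ∈ σ, (-1 : ℝ) ^ ((glue i σ (some B)).card - 1) *
      (Nat.factorial ((glue i σ (some B)).card - 1)) * ∏ B' ∈ glue i σ (some B), m B'
      = (-1 : ℝ) ^ n * (Nat.factorial n) * (c * ∏ B' ∈ σ, m B') := by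
    intro B hB
    rw [glue_some_card i hσ hB, hn]
    simp only [Nat.add_sub_cancel]
    congr 1
    rw [glue, Finset.prod_insert (insert_not_mem_erase i hσ),
      hm B (not_mem_of_block i hσ hB), ← Finset.mul_prod_erase σ m hB]
    ring
  rw [hterm_none, Finset.sum_congr rfl hterm_some, Finset.sum_const, hn,
    Nat.factorial_succ]
  push_cast
  ring

end CumulantAux


section Measure

variable {Ω : Type*} [MeasurableSpace Ω] {μ : Measure Ω} [IsProbabilityMeasure μ]
  {X Y : Ω → ℝ}

lemma integral_mul_pow_eq (l : ℕ) (hX : Measurable X) (hY : Measurable Y)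
    (hintXY : Integrable (fun ω => |X ω| * |Y ω| ^ l) μ)
    (hintX : Integrable X μ)
    (hmean : μ[X | MeasurableSpace.comap Y inferInstance]
      =ᵐ[μ] fun _ => ∫ ω, X ω ∂μ) :
    ∫ ω, X ω * Y ω ^ l ∂μ = (∫ ω, X ω ∂μ) * ∫ ω, Y ω ^ l ∂μ := by
  have hle := hY.comap_le
  haveI : SigmaFinite (μ.trim hle) := by
    have : IsFiniteMeasure (μ.trim hle) := isFiniteMeasure_trim hle
    infer_instance
  have hmeasF : Measurable (fun ω => Y ω ^ l * X ω) := ((hY.pow_const l).mul hX)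
  have hintF : Integrable (fun ω => Y ω ^ l * X ω) μ := by
    refine hintXY.mono' hmeasF.aestronglyMeasurable (Filter.Eventually.of_forall fun ω => ?_)
    rw [Real.norm_eq_abs, abs_mul, abs_pow, mul_comm]
  have hYm : Measurable[MeasurableSpace.comap Y inferInstance] Y := fun s hs => ⟨s, hs, rfl⟩
  have hsm : StronglyMeasurable[MeasurableSpace.comap Y inferInstance] (fun ω => Y ω ^ l) :=
    (hYm.pow_const l).stronglyMeasurable
  have hpull : μ[(fun ω => Y ω ^ l) * X | MeasurableSpace.comap Y inferInstance] =ᵐ[μ] (fun ω => Y ω ^ l) * μ[X | MeasurableSpace.comap Y inferInstance] :=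
    condExp_mul_of_stronglyMeasurable_left hsm hintF hintX
  have h1 : ∫ ω, X ω * Y ω ^ l ∂μ = ∫ ω, ((fun ω => Y ω ^ l) * X) ω ∂μ := by
    apply integral_congr_ae
    exact Filter.Eventually.of_forall fun ω => by simp [mul_comm]
  have h2 : ∫ ω, ((fun ω => Y ω ^ l) * X) ω ∂μ = ∫ ω, (μ[(fun ω => Y ω ^ l) * X | MeasurableSpace.comap Y inferInstance]) ω ∂μ :=
    (integral_condExp hle).symm
  have h3 : ∫ ω, (μ[(fun ω => Y ω ^ l) * X | MeasurableSpace.comap Y inferInstance]) ω ∂μ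
      = ∫ ω, Y ω ^ l * (∫ ω', X ω' ∂μ) ∂μ := by
    apply integral_congr_ae
    filter_upwards [hpull, hmean] with ω h h'
    rw [h]
    simp only [Pi.mul_apply]
    rw [h']
  rw [h1, h2, h3, integral_mul_const]
  ring

end Measure


/-- If `X` is mean independent of `Y` (the conditional expectation of
`X` given the σ-algebra generated by `Y` is a.s. equal to `E[X]`), with the stated
moment conditions, then for every `r ≥ 2` the joint cumulant whose index tuple
consists of `X` once and `Y` repeated `r - 1` times vanishes. -/
theorem cumulant_eq_zero_of_meanIndep
    {Ω : Type*} [MeasurableSpace Ω] (μ : Measure Ω) [IsProbabilityMeasure μ]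
    (X Y : Ω → ℝ) (hX : Measurable X) (hY : Measurable Y)
    {r : ℕ} (hr : 2 ≤ r)
    (hintXY : ∀ l : ℕ, l ≤ r → Integrable (fun ω => |X ω| * |Y ω| ^ l) μ)
    (hintY : ∀ l : ℕ, l ≤ r → Integrable (fun ω => |Y ω| ^ l) μ)
    (hmean : μ[X | MeasurableSpace.comap Y inferInstance]
      =ᵐ[μ] fun _ => ∫ ω, X ω ∂μ) :
    jointCumulant μ (fun k : Fin r => if (k : ℕ) = 0 then X else Y)
      Finset.univ = 0 := by
  classical
  haveI : NeZero r := ⟨by omega⟩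
  set x : Fin r → Ω → ℝ := fun k => if (k : ℕ) = 0 then X else Y with hxdef
  have hintX : Integrable X μ := by
    refine (hintXY 0 (by omega)).mono' hX.aestronglyMeasurable
      (Filter.Eventually.of_forall fun ω => ?_)
    simp [Real.norm_eq_abs]
  have hcard : ∀ B : Finset (Fin r), B.card ≤ r := by
    intro B
    have := Finset.card_le_univ B
    simpa using this
  have hprodY : ∀ (B : Finset (Fin r)), (0 : Fin r) ∉ B → ∀ ω,
      ∏ k ∈ B, x k ω = Y ω ^ B.card := by
    intro B hB ω
    rw [← Finset.prod_const]
    apply Finset.prod_congr rfl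
    intro k hk
    have hk0 : k ≠ 0 := fun h => hB (h ▸ hk)
    have : (k : ℕ) ≠ 0 := fun h => hk0 (Fin.ext (by simp [h]))
    simp [hxdef, this, hk0]
  rw [jointCumulant]
  apply CumulantAux.key_sum (0 : Fin r) (fun B => ∫ ω, ∏ k ∈ B, x k ω ∂μ) (∫ ω, X ω ∂μ)
  · simp
  · intro B hB
    have h1 : ∀ ω, ∏ k ∈ insert (0 : Fin r) B, x k ω = X ω * Y ω ^ B.card := by
      intro ω
      rw [Finset.prod_insert hB, hprodY B hB ω]
      have hx0 : x 0 ω = X ω := by simp [hxdef]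
      rw [hx0]
    have h2 : ∫ ω, ∏ k ∈ insert (0 : Fin r) B, x k ω ∂μ = ∫ ω, X ω * Y ω ^ B.card ∂μ := by
      exact integral_congr_ae (Filter.Eventually.of_forall fun ω => h1 ω)
    have h3 : ∫ ω, ∏ k ∈ B, x k ω ∂μ = ∫ ω, Y ω ^ B.card ∂μ :=
      integral_congr_ae (Filter.Eventually.of_forall fun ω => hprodY B hB ω)
    rw [h2, h3]
    exact integral_mul_pow_eq B.card hX hY (hintXY B.card (hcard B)) hintX hmean
  · refine ⟨⟨1, by omega⟩, Finset.mem_erase.mpr ⟨?_, Finset.mem_univ _⟩⟩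
    intro h
    have : (1 : ℕ) = ((0 : Fin r) : ℕ) := by rw [← h]
    simp at this
end

section
/- Let I_1 ⊔ ⋯ ⊔ I_m be a partition of {1, …, d} and let T be a symmetric tensor of order r on ℝ^d belonging to V_I, i.e., T_{i_1…i_r} = 0 whenever two of the indices i_1, …, i_r lie in different blocks of the partition. Let Q be a d×d orthogonal matrix such that, in the block decomposition of Q induced by the partition, each block row and each block column contains exactly one nonzero submatrix Q[I_a, I_b]. Then the tensor Q ∙ T, defined by (Q ∙ T)_{i_1…i_r} = Σ_{j_1,…,j_r=1}^d Q_{i_1 j_1} ⋯ Q_{i_r j_r} T_{j_1…j_r}, also belongs to V_I. -/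
open Finset Matrix

/-- Let the partition `I_1 ⊔ ⋯ ⊔ I_m` of `{1, …, d}` be recorded by the
(surjective) block-assignment map `b : Fin d → Fin m`, and let `T` be a symmetric
order-`r` tensor on `ℝ^d` lying in `V_I` (its entries vanish whenever two indices lie
in different blocks). If `Q` is orthogonal and, in the induced block decomposition,
every block row and every block column of `Q` contains exactly one nonzero submatrix,
then `Q ∙ T` also lies in `V_I`. -/
theorem blockOrthogonal_preserves_partition_sparsity
    {d m r : ℕ} (b : Fin d → Fin m) (hb : Function.Surjective b)
    (T : (Fin r → Fin d) → ℝ)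
    (hsym : ∀ (σ : Equiv.Perm (Fin r)) (i : Fin r → Fin d), T (i ∘ σ) = T i)
    (hT : ∀ i : Fin r → Fin d, (∃ k l, b (i k) ≠ b (i l)) → T i = 0)
    (Q : Matrix (Fin d) (Fin d) ℝ) (hQ : Qᵀ * Q = 1)
    (hrow : ∀ a : Fin m, ∃! c : Fin m, ∃ u v, b u = a ∧ b v = c ∧ Q u v ≠ 0)
    (hcol : ∀ c : Fin m, ∃! a : Fin m, ∃ u v, b u = a ∧ b v = c ∧ Q u v ≠ 0) :
    ∀ i : Fin r → Fin d, (∃ k l, b (i k) ≠ b (i l)) →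
      (∑ j : Fin r → Fin d, (∏ k, Q (i k) (j k)) * T j) = 0 := by
  rintro i ⟨k, l, hkl⟩
  apply Finset.sum_eq_zero
  intro j _
  by_cases hTj : T j = 0
  · simp [hTj]
  by_cases hP : (∏ k', Q (i k') (j k')) = 0
  · simp [hP]
  exfalso
  have hall : ∀ k', b (j k') = b (j k) := by
    intro k'
    by_contra h
    exact hTj (hT j ⟨k', k, h⟩)
  have hne : ∀ k', Q (i k') (j k') ≠ 0 := by
    intro k' h
    exact hP (Finset.prod_eq_zero (Finset.mem_univ k') h)
  obtain ⟨a, -, huniq⟩ := hcol (b (j k))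
  have h1 : b (i k) = a := huniq _ ⟨i k, j k, rfl, hall k, hne k⟩
  have h2 : b (i l) = a := huniq _ ⟨i l, j l, rfl, hall l, hne l⟩
  exact hkl (h1.trans h2.symm)
end

section
/- Let f_1, …, f_m, g, h : ℝ^n → ℝ be continuous functions satisfying Σ_{i=1}^m f_i(t_1 + C_i t_2) = g(t_1) + h(t_2) for all t_1, t_2 ∈ ℝ^n, where C_1, …, C_m are invertible n×n real matrices such that C_i − C_j is invertible for all i ≠ j. Then f_1, …, f_m, g and h are all polynomial functions of degree at most m. -/
open Polynomial

/-- One-dimensional iterated difference vanishing predicate. -/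
def Van1 : ℕ → (ℝ → ℝ) → Prop
  | 0, φ => ∀ x, φ x = 0
  | (k+1), φ => ∀ σ, Van1 k (fun x => φ (x + σ) - φ x)

lemma van1_congr : ∀ (k : ℕ) {φ ψ : ℝ → ℝ}, (∀ x, φ x = ψ x) → Van1 k φ → Van1 k ψ
  | 0, φ, ψ, h, H => fun x => (h x) ▸ H x
  | (k+1), φ, ψ, h, H => fun σ =>
      van1_congr k (fun x => by rw [h, h]) (H σ)

/-- Discrete antiderivative with degree control. -/
lemma discrete_antideriv : ∀ (d : ℕ) (p : ℝ[X]), p.natDegree ≤ d →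
    ∃ Q : ℝ[X], Q.natDegree ≤ d + 1 ∧ ∀ x, Q.eval (x + 1) - Q.eval x = p.eval x := by
  intro d
  induction d with
  | zero =>
    intro p hp
    refine ⟨C (p.coeff 0) * X, ?_, ?_⟩
    · exact (natDegree_C_mul_le _ _).trans (by simp)
    · intro x
      rw [Polynomial.eq_C_of_natDegree_le_zero hp]
      simp; ring
  | succ d ih =>
    intro p hp
    set a : ℝ := p.coeff (d + 1) with ha
    set R : ℝ[X] := C (a / (d + 2)) * X ^ (d + 2) with hR
    set D : ℝ[X] := C (a / (d + 2)) * ((X + 1) ^ (d + 2) - X ^ (d + 2)) with hD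
    have hDd : D.natDegree ≤ d + 1 := by
      refine (natDegree_C_mul_le _ _).trans ?_
      rw [natDegree_le_iff_coeff_eq_zero]
      intro N hN
      rw [coeff_sub, coeff_X_add_one_pow, coeff_X_pow]
      rcases lt_trichotomy N (d+2) with h | h | h
      · omega
      · simp [h, Nat.choose_self]
      · rw [Nat.choose_eq_zero_of_lt h]; simp [Nat.ne_of_gt h]
    have hDcoeff : D.coeff (d + 1) = a := by
      rw [hD, coeff_C_mul, coeff_sub, coeff_X_add_one_pow, coeff_X_pow]
      rw [if_neg (by omega : ¬ (d+1 = d+2)), Nat.choose_succ_self_right]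
      push_cast
      field_simp
      ring
    have hpd : (p - D).natDegree ≤ d := by
      rw [natDegree_le_iff_coeff_eq_zero]
      intro N hN
      rw [coeff_sub]
      rcases eq_or_lt_of_le (Nat.succ_le_of_lt hN) with h | h
      · rw [← h, hDcoeff, ha, sub_self]
      · rw [natDegree_le_iff_coeff_eq_zero.mp hp N h,
          natDegree_le_iff_coeff_eq_zero.mp hDd N (by omega), sub_self]
    obtain ⟨Q', hQ'd, hQ'⟩ := ih (p - D) hpd
    refine ⟨R + Q', ?_, ?_⟩
    · refine (natDegree_add_le _ _).trans (max_le ?_ (by omega))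
      exact (natDegree_C_mul_le _ _).trans (by simp)
    · intro x
      have hQx := hQ' x
      have hReval : ∀ y : ℝ, R.eval y = (a / (d+2)) * y ^ (d+2) := by intro y; simp [hR]
      have hDeval : D.eval x = (a / (d+2)) * ((x+1) ^ (d+2) - x ^ (d+2)) := by simp [hD]
      simp only [eval_add, eval_sub] at hQx ⊢
      rw [hReval, hReval]
      nlinarith [hQx, hDeval]

/-- A polynomial with period 1 (as a function) takes the same value everywhere as at 0. -/
lemma periodic_poly_const (q : ℝ[X]) (hq : ∀ x : ℝ, q.eval (x + 1) = q.eval x) :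
    ∀ x : ℝ, q.eval x = q.eval 0 := by
  have hr : (q - C (q.eval 0)) = 0 := by
    apply Polynomial.eq_zero_of_infinite_isRoot
    have hN : ∀ N : ℕ, q.eval (N : ℝ) = q.eval 0 := by
      intro N
      induction N with
      | zero => simp
      | succ N ih => push_cast; rw [hq, ih]
    apply Set.infinite_of_injective_forall_mem (f := fun N : ℕ => (N : ℝ)) Nat.cast_injective
    intro N
    simp only [Set.mem_setOf_eq, IsRoot.def, eval_sub, eval_C, hN N, sub_self]
  intro x
  have := congrArg (Polynomial.eval x) hr
  simp only [eval_sub, eval_C, eval_zero] at this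
  linarith

/-- If all differences of a continuous function are polynomial of degree ≤ k,
the function is polynomial of degree ≤ k+1. -/
lemma step_up (φ : ℝ → ℝ) (hφ : Continuous φ) (k : ℕ)
    (H : ∀ σ : ℝ, ∃ p : ℝ[X], p.natDegree ≤ k ∧ ∀ x, φ (x + σ) - φ x = p.eval x) :
    ∃ P : ℝ[X], P.natDegree ≤ k + 1 ∧ ∀ x, φ x = P.eval x := by
  obtain ⟨p₁, hp₁d, hp₁⟩ := H 1
  obtain ⟨Q, hQd, hQ⟩ := discrete_antideriv k p₁ hp₁d
  set ψ : ℝ → ℝ := fun x => φ x - Q.eval x with hψ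
  have hψc : Continuous ψ := hφ.sub (Polynomial.continuous Q)
  have hper : ∀ x, ψ (x + 1) = ψ x := by
    intro x
    simp only [hψ]
    have := hp₁ x
    have := hQ x
    linarith
  have hconst : ∀ σ x : ℝ, ψ (x + σ) - ψ x = ψ σ - ψ 0 := by
    intro σ x
    obtain ⟨p, hpd, hp⟩ := H σ
    set r : ℝ[X] := p - (Q.comp (X + C σ) - Q) with hr
    have hrx : ∀ y, ψ (y + σ) - ψ y = r.eval y := by
      intro y
      simp only [hψ, hr, eval_sub, eval_comp, eval_add, eval_X, eval_C]
      have := hp y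
      linarith
    have hrper : ∀ y : ℝ, r.eval (y + 1) = r.eval y := by
      intro y
      have h1 := hrx (y + 1)
      have h2 := hrx y
      have h3 : ψ (y + 1 + σ) = ψ (y + σ) := by
        rw [show y + 1 + σ = (y + σ) + 1 by ring, hper]
      rw [hper] at h1
      linarith
    have h0 := hrx 0
    have hx := hrx x
    rw [periodic_poly_const r hrper x] at hx
    rw [zero_add] at h0
    linarith
  -- the additive continuous map σ ↦ ψ σ - ψ 0 vanishes
  have hadd : ∀ σ τ : ℝ, (ψ (σ + τ) - ψ 0) = (ψ σ - ψ 0) + (ψ τ - ψ 0) := by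
    intro σ τ
    have h1 := hconst σ τ
    rw [add_comm σ τ]
    linarith
  set c : ℝ → ℝ := fun σ => ψ σ - ψ 0 with hc
  have hc1 : c 1 = 0 := by simp only [hc]; rw [show (1:ℝ) = 0 + 1 by ring, hper]; ring
  have hcadd : ∀ σ τ, c (σ + τ) = c σ + c τ := hadd
  have chom : ∃ C : ℝ →+ ℝ, ∀ x, C x = c x :=
    ⟨AddMonoidHom.mk' c hcadd, fun _ => rfl⟩
  obtain ⟨Ch, hCh⟩ := chom
  have hrat : ∀ q : ℚ, c (q : ℝ) = 0 := by
    intro q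
    have hqd : (q.den : ℝ) ≠ 0 := Nat.cast_ne_zero.mpr q.den_nz
    have hnum : Ch ((q.num : ℝ)) = 0 := by
      have h1 : ((q.num : ℝ)) = q.num • (1 : ℝ) := by simp
      rw [h1, map_zsmul, hCh, hc1, smul_zero]
    have hmul : (q.den : ℝ) * (q : ℝ) = (q.num : ℝ) := by
      rw [Rat.cast_def]; field_simp
    have hden : (q.den : ℝ) * Ch q = Ch ((q.den : ℝ) * q) := by
      rw [show ((q.den : ℝ) * (q:ℝ)) = q.den • (q:ℝ) by simp, map_nsmul]
      simp
    rw [hmul, hnum] at hden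
    have := mul_eq_zero.mp hden
    rcases this with h | h
    · exact absurd h hqd
    · rw [← hCh]; exact h
  have hcc : Continuous c := hψc.sub continuous_const
  have hczero : c = fun _ => (0:ℝ) :=
    Rat.denseRange_cast.equalizer hcc continuous_const (funext fun q => hrat q)
  have hψconst : ∀ x, ψ x = ψ 0 := by
    intro x
    have := congrFun hczero x
    simp only [hc] at this
    linarith
  refine ⟨Q + C (ψ 0), ?_, ?_⟩
  · refine (natDegree_add_le _ _).trans (max_le hQd ?_)
    simp
  · intro x
    have := hψconst x
    have h0 : ψ 0 = φ 0 - Polynomial.eval 0 Q := rfl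
    simp only [hψ] at this
    simp only [eval_add, eval_C]
    rw [h0]
    linarith

/-- 1-D Fréchet: continuous functions with vanishing iterated differences are polynomial. -/
lemma frechet1D : ∀ (k : ℕ) (φ : ℝ → ℝ), Continuous φ → Van1 (k + 1) φ →
    ∃ P : ℝ[X], P.natDegree ≤ k ∧ ∀ x, φ x = P.eval x := by
  intro k
  induction k with
  | zero =>
    intro φ hφ hV
    refine ⟨C (φ 0), by simp, fun x => ?_⟩
    have := hV x 0
    simp only [zero_add] at this
    simp only [eval_C]
    linarith
  | succ k ih =>
    intro φ hφ hV
    apply step_up φ hφ k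
    intro σ
    exact ih (fun x => φ (x + σ) - φ x)
      ((hφ.comp (continuous_id.add continuous_const)).sub hφ) (hV σ)

open MvPolynomial

/-- Multidimensional iterated difference vanishing predicate. -/
def VanV {n : ℕ} : ℕ → ((Fin n → ℝ) → ℝ) → Prop
  | 0, f => ∀ x, f x = 0
  | (k+1), f => ∀ w, VanV k (fun x => f (x + w) - f x)

lemma vanV_congr {n : ℕ} : ∀ (k : ℕ) {f g : (Fin n → ℝ) → ℝ},
    (∀ x, f x = g x) → VanV k f → VanV k g
  | 0, f, g, h, H => fun x => (h x) ▸ H x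
  | (k+1), f, g, h, H => fun w =>
      vanV_congr k (fun x => by rw [h, h]) (H w)

lemma vanV_line {n : ℕ} : ∀ (k : ℕ) (f : (Fin n → ℝ) → ℝ), VanV k f →
    ∀ (x w : Fin n → ℝ), Van1 k (fun s => f (x + s • w)) := by
  intro k
  induction k with
  | zero => intro f hf x w s; exact hf _
  | succ k ih =>
    intro f hf x w σ
    refine van1_congr k
      (φ := fun s => (fun y => f (y + σ • w) - f y) (x + s • w))
      (fun s => ?_) (ih _ (hf (σ • w)) x w)
    show f (x + s • w + σ • w) - f (x + s • w)
        = f (x + (s + σ) • w) - f (x + s • w)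
    rw [show x + s • w + σ • w = x + (s + σ) • w by rw [add_smul]; abel]

lemma eval_polyaeval {N : ℕ} (B : ℝ[X]) (x : Fin N → ℝ) (i : Fin N) :
    MvPolynomial.eval x (Polynomial.aeval (MvPolynomial.X i : MvPolynomial (Fin N) ℝ) B)
      = B.eval (x i) := by
  have h := Polynomial.aeval_algHom_apply
    (MvPolynomial.aeval x : MvPolynomial (Fin N) ℝ →ₐ[ℝ] ℝ) (MvPolynomial.X i) B
  simp only [MvPolynomial.aeval_X] at h
  have h2 : ∀ Q : MvPolynomial (Fin N) ℝ, MvPolynomial.aeval x Q = MvPolynomial.eval x Q := by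
    intro Q
    rw [← MvPolynomial.coe_aeval_eq_eval]
    rfl
  have h3 : Polynomial.aeval (x i) B = Polynomial.eval (x i) B :=
    congrFun (Polynomial.coe_aeval_eq_eval (x i)) B
  rw [← h2, ← h, h3]

lemma glue : ∀ (n D : ℕ) (f : (Fin n → ℝ) → ℝ),
    (∀ (i : Fin n) (x : Fin n → ℝ), ∃ p : ℝ[X], p.natDegree ≤ D ∧
      ∀ s, f (Function.update x i s) = p.eval s) →
    ∃ P : MvPolynomial (Fin n) ℝ, ∀ x, f x = MvPolynomial.eval x P := by
  intro n
  induction n with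
  | zero =>
    intro D f _
    refine ⟨MvPolynomial.C (f (fun i => i.elim0)), fun x => ?_⟩
    rw [MvPolynomial.eval_C]
    congr 1
    funext i
    exact i.elim0
  | succ n ih =>
    intro D f hf
    have hslice : ∀ a : ℝ, ∃ q : MvPolynomial (Fin n) ℝ,
        ∀ y : Fin n → ℝ, f (Fin.snoc y a) = MvPolynomial.eval y q := by
      intro a
      apply ih D (fun y => f (Fin.snoc y a))
      intro i y
      obtain ⟨p, hpd, hp⟩ := hf i.castSucc (Fin.snoc y a)
      refine ⟨p, hpd, fun s => ?_⟩
      rw [← hp s, Fin.snoc_update]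
    choose q hq using hslice
    classical
    set sN : Finset ℕ := Finset.range (D + 1) with hsN
    set v : ℕ → ℝ := fun j => (j : ℝ) with hv
    have hinj : Set.InjOn v sN := fun a _ b _ h => Nat.cast_injective h
    refine ⟨∑ j ∈ sN, (MvPolynomial.rename Fin.castSucc (q (v j))) *
        (Polynomial.aeval (MvPolynomial.X (Fin.last n)) (Lagrange.basis sN v j)), fun x => ?_⟩
    obtain ⟨p, hpd, hp⟩ := hf (Fin.last n) x
    have hupd : ∀ a : ℝ, Function.update x (Fin.last n) a = Fin.snoc (Fin.init x) a := by
      intro a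
      conv_lhs => rw [← Fin.snoc_init_self x]
      rw [Fin.update_snoc_last]
    have hx : ∀ a : ℝ, f (Fin.snoc (Fin.init x) a) = p.eval a := by
      intro a
      rw [← hp a, hupd a]
    have hdeg : p.degree < (sN.card : ℕ) := by
      rw [hsN, Finset.card_range]
      calc p.degree ≤ (p.natDegree : WithBot ℕ) := Polynomial.degree_le_natDegree
        _ < ((D + 1 : ℕ) : WithBot ℕ) := by exact_mod_cast Nat.lt_succ_of_le hpd
    have hinterp := Lagrange.eq_interpolate hinj hdeg
    have hfx : f x = p.eval (x (Fin.last n)) := by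
      rw [← hx (x (Fin.last n)), Fin.snoc_init_self]
    rw [hfx, hinterp]
    rw [Lagrange.interpolate_apply]
    rw [Polynomial.eval_finset_sum, map_sum]
    refine Finset.sum_congr rfl (fun j hj => ?_)
    rw [Polynomial.eval_mul, Polynomial.eval_C, map_mul, MvPolynomial.eval_rename,
      eval_polyaeval]
    congr 1
    have : x ∘ Fin.castSucc = Fin.init x := rfl
    rw [this, ← hq (v j) (Fin.init x), hx (v j)]

lemma homogeneousComponent_monomial' {n : ℕ} (d : ℕ) (u : Fin n →₀ ℕ) (a : ℝ) :
    MvPolynomial.homogeneousComponent d (MvPolynomial.monomial u a)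
      = if u.degree = d then MvPolynomial.monomial u a else 0 := by
  classical
  ext e
  rw [MvPolynomial.coeff_homogeneousComponent, MvPolynomial.coeff_monomial]
  by_cases he : u = e
  · subst he
    split_ifs with h1 h2 h3 <;>
      simp_all [MvPolynomial.coeff_monomial]
  · split_ifs with h1 h2 h3 <;>
      simp_all [MvPolynomial.coeff_monomial, he]

lemma coeff_lineSubst {n : ℕ} (w : Fin n → ℝ) (p : MvPolynomial (Fin n) ℝ) (d : ℕ) :
    (MvPolynomial.aeval (fun i => Polynomial.C (w i) * Polynomial.X : Fin n → ℝ[X]) p).coeff d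
      = MvPolynomial.eval w (MvPolynomial.homogeneousComponent d p) := by
  induction p using MvPolynomial.induction_on' with
  | monomial u a =>
    rw [MvPolynomial.aeval_monomial]
    have hprod : (u.prod fun i k => (Polynomial.C (w i) * Polynomial.X : ℝ[X]) ^ k)
        = Polynomial.C (u.prod fun i k => w i ^ k) *
          Polynomial.X ^ u.degree := by
      rw [Finsupp.prod, Finsupp.prod, Finsupp.degree_apply]
      rw [← Finset.prod_pow_eq_pow_sum, map_prod, ← Finset.prod_mul_distrib]
      exact Finset.prod_congr rfl (fun i _ => by rw [mul_pow, Polynomial.C_pow])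
    rw [hprod]
    have halg : (algebraMap ℝ ℝ[X]) a = Polynomial.C a := rfl
    rw [halg, ← mul_assoc, ← map_mul, Polynomial.coeff_C_mul, Polynomial.coeff_X_pow]
    rw [homogeneousComponent_monomial']
    by_cases hd : u.degree = d
    · rw [if_pos hd.symm, if_pos hd, mul_one, MvPolynomial.eval_monomial]
    · rw [if_neg (fun h => hd h.symm), if_neg hd, mul_zero, map_zero]
  | add p q ihp ihq =>
    rw [map_add, Polynomial.coeff_add, map_add, map_add, ihp, ihq]

lemma eval_lineSubst {n : ℕ} (w : Fin n → ℝ) (p : MvPolynomial (Fin n) ℝ) (s : ℝ) :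
    Polynomial.eval s
        (MvPolynomial.aeval (fun i => Polynomial.C (w i) * Polynomial.X : Fin n → ℝ[X]) p)
      = MvPolynomial.eval (s • w) p := by
  induction p using MvPolynomial.induction_on with
  | C a => simp
  | add p q hp hq => simp [hp, hq]
  | mul_X p i hp =>
    simp only [map_mul, MvPolynomial.aeval_X, Polynomial.eval_mul, Polynomial.eval_C,
      Polynomial.eval_X, MvPolynomial.eval_X, hp, Pi.smul_apply, smul_eq_mul]
    ring

lemma totalDegree_le_of_lines {n : ℕ} (m : ℕ) (p : MvPolynomial (Fin n) ℝ)
    (H : ∀ w : Fin n → ℝ, ∃ q : ℝ[X], q.natDegree ≤ m ∧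
      ∀ s : ℝ, MvPolynomial.eval (s • w) p = q.eval s) :
    p.totalDegree ≤ m := by
  by_contra hlt
  push_neg at hlt
  set d := p.totalDegree with hd
  have hp0 : p ≠ 0 := by
    intro h
    rw [h] at hd
    simp [MvPolynomial.totalDegree_zero] at hd
    omega
  have hne : MvPolynomial.homogeneousComponent d p ≠ 0 := by
    obtain ⟨u, hu, hsup⟩ := Finset.exists_mem_eq_sup p.support
      (MvPolynomial.support_nonempty.mpr hp0) (fun u => u.sum fun _ e => e)
    intro hzero
    have hc := congrArg (MvPolynomial.coeff u) hzero
    rw [MvPolynomial.coeff_homogeneousComponent] at hc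
    have hdeg : u.degree = d := by
      rw [hd, MvPolynomial.totalDegree, hsup]
      rfl
    rw [if_pos hdeg] at hc
    exact (MvPolynomial.mem_support_iff.mp hu) hc
  obtain ⟨w, hw⟩ : ∃ w : Fin n → ℝ, MvPolynomial.eval w
      (MvPolynomial.homogeneousComponent d p) ≠ 0 := by
    by_contra hall
    push_neg at hall
    exact hne (MvPolynomial.funext (fun x => by rw [hall x, map_zero]))
  obtain ⟨q, hqd, hq⟩ := H w
  have hkey : (MvPolynomial.aeval (fun i => Polynomial.C (w i) * Polynomial.X : Fin n → ℝ[X]) p)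
      = q := by
    apply Polynomial.funext
    intro s
    rw [← hq s, eval_lineSubst]
  have := coeff_lineSubst w p d
  rw [hkey, Polynomial.coeff_eq_zero_of_natDegree_lt (lt_of_le_of_lt hqd hlt)] at this
  exact hw this.symm

lemma frechetND {n : ℕ} (m : ℕ) (f : (Fin n → ℝ) → ℝ) (hf : Continuous f)
    (hv : VanV (m + 1) f) :
    ∃ p : MvPolynomial (Fin n) ℝ, p.totalDegree ≤ m ∧ ∀ t, f t = MvPolynomial.eval t p := by
  have hline : ∀ (x w : Fin n → ℝ), ∃ q : ℝ[X], q.natDegree ≤ m ∧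
      ∀ s, f (x + s • w) = q.eval s := by
    intro x w
    exact frechet1D m (fun s => f (x + s • w))
      (hf.comp (continuous_const.add (continuous_id.smul continuous_const)))
      (vanV_line (m+1) f hv x w)
  have hax : ∀ (i : Fin n) (x : Fin n → ℝ), ∃ p : ℝ[X], p.natDegree ≤ m ∧
      ∀ s, f (Function.update x i s) = p.eval s := by
    intro i x
    obtain ⟨q, hqd, hq⟩ := hline (Function.update x i 0) (Pi.single i 1)
    refine ⟨q, hqd, fun s => ?_⟩
    rw [← hq s]
    congr 1
    funext j
    by_cases hji : j = i
    · subst hji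
      simp
    · simp [Function.update_of_ne hji, Pi.single_eq_of_ne hji]
  obtain ⟨P, hP⟩ := glue n m f hax
  refine ⟨P, ?_, hP⟩
  apply totalDegree_le_of_lines
  intro w
  obtain ⟨q, hqd, hq⟩ := hline 0 w
  exact ⟨q, hqd, fun s => by rw [← hP, ← hq s, zero_add]⟩

lemma vanV_sum {n : ℕ} {ι : Type*} : ∀ (k : ℕ) (s : Finset ι) (F : ι → (Fin n → ℝ) → ℝ),
    (∀ i ∈ s, VanV k (F i)) → VanV k (fun x => ∑ i ∈ s, F i x) := by
  intro k
  induction k with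
  | zero => intro s F h x; exact Finset.sum_eq_zero (fun i hi => h i hi x)
  | succ k ih =>
    intro s F h w
    refine vanV_congr k (f := fun x => ∑ i ∈ s, (F i (x + w) - F i x)) ?_ ?_
    · intro x
      simp only []
      rw [Finset.sum_sub_distrib]
    · exact ih s _ (fun i hi => h i hi w)

lemma vanV_lin {n : ℕ} : ∀ (k : ℕ) (F : (Fin n → ℝ) → ℝ) (A : Matrix (Fin n) (Fin n) ℝ),
    VanV k F → VanV k (fun x => F (A.mulVec x)) := by
  intro k
  induction k with
  | zero => intro F A h x; exact h _
  | succ k ih =>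
    intro F A h w
    refine vanV_congr k
      (f := fun x => (fun y => F (y + A.mulVec w) - F y) (A.mulVec x))
      (fun x => ?_) (ih _ A (h (A.mulVec w)))
    show F (A.mulVec x + A.mulVec w) - F (A.mulVec x)
        = F (A.mulVec (x + w)) - F (A.mulVec x)
    rw [Matrix.mulVec_add]

lemma key {n : ℕ} {ι : Type} [DecidableEq ι] (C : ι → Matrix (Fin n) (Fin n) ℝ)
    (hC : ∀ i, IsUnit (C i).det) (hCij : ∀ i j, i ≠ j → IsUnit (C i - C j).det)
    (s : Finset ι) :
    ∀ (f : ι → (Fin n → ℝ) → ℝ) (g h : (Fin n → ℝ) → ℝ),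
    (∀ t₁ t₂, ∑ i ∈ s, f i (t₁ + (C i).mulVec t₂) = g t₁ + h t₂) →
    ∀ i ∈ s, VanV (s.card + 1) (f i) := by
  induction s using Finset.strongInduction with
  | _ s ih =>
    intro f g h heq i hi
    by_cases hcard : s.card = 1
    · -- base case : a single function
      obtain ⟨a, ha⟩ := Finset.card_eq_one.mp hcard
      subst ha
      have hia : i = a := Finset.mem_singleton.mp hi
      subst hia
      have hval : ∀ y v', f i (y + (C i).mulVec v') = g y + h v' := by
        intro y v'
        have := heq y v'
        rwa [Finset.sum_singleton] at this
      have hval0 : ∀ y, f i y = g y + h 0 := by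
        intro y
        have := hval y 0
        rwa [Matrix.mulVec_zero, add_zero] at this
      rw [hcard]
      intro w u x
      simp only []
      set v : Fin n → ℝ := (C i)⁻¹.mulVec u with hvdef
      have hCv : (C i).mulVec v = u := by
        rw [hvdef, Matrix.mulVec_mulVec, Matrix.mul_nonsing_inv _ (hC i), Matrix.one_mulVec]
      have e1 : x + u + w = (x + w) + (C i).mulVec v := by rw [hCv]; abel
      have e2 : x + u = x + (C i).mulVec v := by rw [hCv]
      have h1 : f i (x + u + w) = g (x + w) + h v := by rw [e1, hval]
      have h2 : f i (x + u) = g x + h v := by rw [e2, hval]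
      have h3 := hval0 (x + w)
      have h4 := hval0 x
      linarith
    · -- inductive step: eliminate an index j ≠ i
      have h1c : 1 < s.card := by
        have : 0 < s.card := Finset.card_pos.mpr ⟨i, hi⟩
        omega
      obtain ⟨j, hjs, hji⟩ := Finset.exists_mem_ne h1c i
      rw [← Finset.card_erase_add_one hjs]
      intro w
      set v : Fin n → ℝ := (C j - C i)⁻¹.mulVec w with hvdef
      have hv : (C j - C i).mulVec v = w := by
        rw [hvdef, Matrix.mulVec_mulVec, Matrix.mul_nonsing_inv _ (hCij j i hji),
          Matrix.one_mulVec]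
      set f' : ι → (Fin n → ℝ) → ℝ :=
        fun k x => f k (x + (C j - C k).mulVec v) - f k x with hf'def
      have heq' : ∀ t₁ t₂, ∑ k ∈ s.erase j, f' k (t₁ + (C k).mulVec t₂)
          = (fun x => g (x + (C j).mulVec v) - g x) t₁
            + (fun t => h (t - v) - h t) t₂ := by
        intro t₁ t₂
        have E1 := heq (t₁ + (C j).mulVec v) (t₂ - v)
        have E2 := heq t₁ t₂
        have harg : ∀ k, t₁ + (C j).mulVec v + (C k).mulVec (t₂ - v)
            = (t₁ + (C k).mulVec t₂) + ((C j) - (C k)).mulVec v := by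
          intro k
          rw [Matrix.mulVec_sub, Matrix.sub_mulVec]
          abel
        rw [Finset.sum_congr rfl (fun k _ => by rw [harg k])] at E1
        have hfj : f' j (t₁ + (C j).mulVec t₂) = 0 := by
          rw [hf'def]
          simp only [sub_self, Matrix.zero_mulVec, add_zero]
        rw [Finset.sum_erase s hfj]
        have hsplit : ∑ k ∈ s, f' k (t₁ + (C k).mulVec t₂)
            = (∑ k ∈ s, f k ((t₁ + (C k).mulVec t₂) + ((C j) - (C k)).mulVec v))
              - ∑ k ∈ s, f k (t₁ + (C k).mulVec t₂) := by
          rw [← Finset.sum_sub_distrib]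
        rw [hsplit, E1, E2]
        ring
      have hIH := ih (s.erase j) (Finset.erase_ssubset hjs) f'
        (fun x => g (x + (C j).mulVec v) - g x) (fun t => h (t - v) - h t) heq'
        i (Finset.mem_erase.mpr ⟨Ne.symm hji, hi⟩)
      refine vanV_congr _ (f := f' i) (fun x => ?_) hIH
      show f i (x + (C j - C i).mulVec v) - f i x = f i (x + w) - f i x
      rw [hv]

open Matrix MvPolynomial

/-- If continuous functions `f_1, …, f_m, g, h : ℝ^n → ℝ` satisfy
`Σ_i f_i (t₁ + C_i t₂) = g(t₁) + h(t₂)` for all `t₁, t₂`, where the `C_i` are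
invertible `n × n` matrices with `C_i - C_j` invertible for `i ≠ j`, then all of
`f_1, …, f_m, g, h` are polynomial functions of degree at most `m`. -/
theorem additive_decomposition_polynomial_vector
    {n m : ℕ} (f : Fin m → (Fin n → ℝ) → ℝ) (g h : (Fin n → ℝ) → ℝ)
    (hf : ∀ i, Continuous (f i)) (hg : Continuous g) (hh : Continuous h)
    (C : Fin m → Matrix (Fin n) (Fin n) ℝ)
    (hC : ∀ i, IsUnit (C i).det)
    (hCij : ∀ i j, i ≠ j → IsUnit (C i - C j).det)
    (heq : ∀ t₁ t₂ : Fin n → ℝ, ∑ i, f i (t₁ + (C i).mulVec t₂) = g t₁ + h t₂) :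
    (∀ i, ∃ p : MvPolynomial (Fin n) ℝ,
        p.totalDegree ≤ m ∧ ∀ t, f i t = MvPolynomial.eval t p) ∧
    (∃ p : MvPolynomial (Fin n) ℝ,
        p.totalDegree ≤ m ∧ ∀ t, g t = MvPolynomial.eval t p) ∧
    (∃ p : MvPolynomial (Fin n) ℝ,
        p.totalDegree ≤ m ∧ ∀ t, h t = MvPolynomial.eval t p) := by
  classical
  have hkey := key C hC hCij Finset.univ f g h heq
  have hcard : (Finset.univ : Finset (Fin m)).card = m := by simp
  have hvf : ∀ i, VanV (m + 1) (f i) := by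
    intro i
    have := hkey i (Finset.mem_univ i)
    rwa [hcard] at this
  have hgval : ∀ x, g x = (∑ i, f i x) - h 0 := by
    intro x
    have := heq x 0
    simp only [Matrix.mulVec_zero, add_zero] at this
    linarith
  have hhval : ∀ t, h t = (∑ i, f i ((C i).mulVec t)) - g 0 := by
    intro t
    have := heq 0 t
    simp only [zero_add] at this
    linarith
  have hvg : VanV (m + 1) g := by
    intro w
    refine vanV_congr m (f := fun x => ∑ i, (f i (x + w) - f i x)) (fun x => ?_)
      (vanV_sum m Finset.univ _ (fun i _ => hvf i w))
    show ∑ i, (f i (x + w) - f i x) = g (x + w) - g x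
    rw [hgval (x + w), hgval x, Finset.sum_sub_distrib]
    ring
  have hvh : VanV (m + 1) h := by
    intro w
    refine vanV_congr m
      (f := fun t => ∑ i, (f i ((C i).mulVec (t + w)) - f i ((C i).mulVec t)))
      (fun t => ?_)
      (vanV_sum m Finset.univ _ (fun i _ => (vanV_lin (m + 1) (f i) (C i) (hvf i)) w))
    show ∑ i, (f i ((C i).mulVec (t + w)) - f i ((C i).mulVec t)) = h (t + w) - h t
    rw [hhval (t + w), hhval t, Finset.sum_sub_distrib]
    ring
  exact ⟨fun i => frechetND m (f i) (hf i) (hvf i),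
    frechetND m g hg hvg, frechetND m h hh hvh⟩
end
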